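/- Let G be a connected twin-free bipartite graph on n ≥ 3 vertices that is not the path P4. Then γ^ID(G) ≤ 2n/3. -/

import Mathlib

open SimpleGraph

/-- The closed neighbourhood of a vertex. -/
def closedNbr {V : Type*} (G : SimpleGraph V) (v : V) : Set V := insert v (G.neighborSet v)

/-- `C` is an identifying code of `G`. -/
def IsIdCode {V : Type*} (G : SimpleGraph V) (C : Set V) : Prop :=
  (∀ v : V, (closedNbr G v ∩ C).Nonempty) ∧
  ∀ u v : V, closedNbr G u ∩ C = closedNbr G v ∩ C → u = v

/-- A vertex of degree 1. -/
def IsLeaf {V : Type*} (G : SimpleGraph V) (v : V) : Prop := (G.neighborSet v).ncard = 1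

/-- The set of leaves of `G`. -/
def leaves {V : Type*} (G : SimpleGraph V) : Set V := {v | IsLeaf G v}

/-- The set of support vertices of `G`. -/
def supports {V : Type*} (G : SimpleGraph V) : Set V := {v | ∃ u, IsLeaf G u ∧ G.Adj v u}

/-- `G` is identifiable: distinct vertices have distinct closed neighbourhoods. -/
def Identifiable {V : Type*} (G : SimpleGraph V) : Prop :=
  ∀ u v : V, closedNbr G u = closedNbr G v → u = v

/-- `G` is twin-free: no two distinct vertices share an open or closed neighbourhood. -/
def TwinFree {V : Type*} (G : SimpleGraph V) : Prop :=
  ∀ u v : V, u ≠ v →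
    G.neighborSet u ≠ G.neighborSet v ∧ closedNbr G u ≠ closedNbr G v

section Helpers

variable {V : Type*} (G : SimpleGraph V)

lemma mem_closedNbr {v x : V} : x ∈ closedNbr G v ↔ x = v ∨ G.Adj v x := by
  simp [closedNbr]

variable {G}

lemma reach_closed (hconn : G.Connected) (S : Set V)
    (hcl : ∀ ⦃x⦄, x ∈ S → ∀ ⦃y⦄, G.Adj x y → y ∈ S) {u : V} (hu : u ∈ S) (v : V) : v ∈ S := by
  have aux : ∀ {a b : V} (_ : G.Walk a b), a ∈ S → b ∈ S := by
    intro a b p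
    induction p with
    | nil => exact id
    | cons h p ih => intro ha; exact ih (hcl ha h)
  exact aux (hconn.preconnected u v).some hu

lemma not_K2 [Fintype V] (hconn : G.Connected) (hn : 3 ≤ Fintype.card V) {u w : V}
    (h1 : G.neighborSet u = {w}) (h2 : G.neighborSet w = {u}) : False := by
  have hcl : ∀ ⦃x⦄, x ∈ ({u, w} : Set V) → ∀ ⦃y⦄, G.Adj x y → y ∈ ({u, w} : Set V) := by
    rintro x (rfl | rfl) y hy
    · have : y ∈ G.neighborSet x := hy
      rw [h1] at this; right; exact this
    · have : y ∈ G.neighborSet x := hy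
      rw [h2] at this; left; exact this
  have hsub : (Set.univ : Set V) ⊆ {u, w} :=
    fun v _ => reach_closed hconn _ hcl (by left; rfl) v
  have h2' : ({u, w} : Set V).ncard ≤ 2 := by
    refine le_trans (Set.ncard_insert_le _ _) ?_
    simp [Set.ncard_singleton]
  have := Set.ncard_le_ncard hsub (Set.toFinite _)
  rw [Set.ncard_univ, Nat.card_eq_fintype_card] at this
  omega

lemma exists_adj [Fintype V] (hconn : G.Connected) (hn : 3 ≤ Fintype.card V) (v : V) :
    ∃ w, G.Adj v w := by
  obtain ⟨u, hu⟩ := Fintype.exists_ne_of_one_lt_card (by omega) v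
  obtain ⟨p⟩ := hconn.preconnected v u
  cases p with
  | nil => exact absurd rfl hu.symm
  | cons h _ => exact ⟨_, h⟩




variable (G)

noncomputable def supOf (v : V) : V :=
  haveI : Nonempty V := ⟨v⟩
  Classical.epsilon (fun u => G.neighborSet v = {u})

variable {G}

lemma supOf_spec {v : V} (hv : IsLeaf G v) : G.neighborSet v = {supOf G v} := by
  have h : ∃ u, G.neighborSet v = {u} := Set.ncard_eq_one.mp hv
  exact Classical.epsilon_spec h

lemma adj_supOf {v : V} (hv : IsLeaf G v) : G.Adj v (supOf G v) := by
  have : supOf G v ∈ G.neighborSet v := by rw [supOf_spec hv]; rfl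
  exact this

lemma leaf_nbhd_eq {v u : V} (hv : IsLeaf G v) (h : G.Adj v u) : G.neighborSet v = {u} := by
  have h1 := supOf_spec hv
  have : u ∈ G.neighborSet v := h
  rw [h1] at this
  rw [h1, this]

lemma leaf_eq_of_adj (htf : TwinFree G) {u w w' : V} (hw : IsLeaf G w) (hw' : IsLeaf G w')
    (h : G.Adj u w) (h' : G.Adj u w') : w = w' := by
  by_contra hne
  exact (htf w w' hne).1 (by rw [leaf_nbhd_eq hw h.symm, leaf_nbhd_eq hw' h'.symm])


lemma support_other [Fintype V] (hconn : G.Connected) (hn : 3 ≤ Fintype.card V)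
    (htf : TwinFree G) {u : V} (hu : u ∈ supports G) :
    ∃ d, G.Adj u d ∧ ¬ IsLeaf G d := by
  obtain ⟨w, hwl, huw⟩ := hu
  by_contra h
  push_neg at h
  have hNu : G.neighborSet u = {w} := by
    ext d
    constructor
    · intro hd
      have had : G.Adj u d := hd
      exact leaf_eq_of_adj htf (h d had) hwl had huw
    · rintro rfl; exact huw
  exact not_K2 hconn hn hNu (leaf_nbhd_eq hwl huw.symm)

lemma leaf_support_not_leaf [Fintype V] (hconn : G.Connected) (hn : 3 ≤ Fintype.card V)
    {v : V} (hv : IsLeaf G v) : ¬ IsLeaf G (supOf G v) := by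
  intro h
  exact not_K2 hconn hn (supOf_spec hv) (leaf_nbhd_eq h (adj_supOf hv).symm)

lemma no_triangle (hc : G.Coloring (Fin 2)) {u v x : V}
    (h1 : G.Adj u v) (h2 : G.Adj u x) (h3 : G.Adj v x) : False := by
  have e1 := hc.valid h1
  have e2 := hc.valid h2
  have e3 := hc.valid h3
  have : ∀ a b c : Fin 2, a ≠ b → a ≠ c → b ≠ c → False := by decide
  exact this _ _ _ e1 e2 e3

lemma fin2_eq {i a b : Fin 2} (ha : a ≠ i) (hb : b ≠ i) : a = b := by
  fin_cases i <;> fin_cases a <;> fin_cases b <;> simp_all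

end Helpers

section Side
variable {V : Type*} [Fintype V] {G : SimpleGraph V}

lemma side_code (hconn : G.Connected) (htf : TwinFree G) (hn : 3 ≤ Fintype.card V)
    (hc : G.Coloring (Fin 2)) (i : Fin 2) :
    ∃ C : Set V, IsIdCode G C ∧
      C.ncard ≤ ({v | hc v = i}).ncard + (supports G ∩ {v | hc v = i}).ncard := by
  classical
  set A : Set V := {v | hc v = i} with hA
  have hchoice : ∀ u ∈ supports G, ∃ d, G.Adj u d ∧ ¬ IsLeaf G d :=
    fun u hu => support_other hconn hn htf hu
  choose! dfun hd1 hd2 using hchoice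
  set C : Set V := A ∪ dfun '' (supports G ∩ A) with hC
  have hAC : A ⊆ C := Set.subset_union_left
  -- cross case
  have cross : ∀ {a b : V}, hc a = i → hc b ≠ i →
      closedNbr G a ∩ C = closedNbr G b ∩ C → False := by
    intro a b ha hb h
    have haC : a ∈ C := hAC ha
    have haa : a ∈ closedNbr G b ∩ C := by
      rw [← h]; exact ⟨(mem_closedNbr G).mpr (Or.inl rfl), haC⟩
    have hadj : G.Adj b a := by
      rcases (mem_closedNbr G).mp haa.1 with rfl | hadj
      · exact absurd ha hb
      · exact hadj
    have hNb : G.neighborSet b = {a} := by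
      ext x
      constructor
      · intro hx
        have hbx : G.Adj b x := hx
        have hxi : hc x = i := by
          by_contra hxi
          exact (hc.valid hbx) (fin2_eq hb hxi)
        have : x ∈ closedNbr G a ∩ C := by
          rw [h]; exact ⟨(mem_closedNbr G).mpr (Or.inr hbx), hAC hxi⟩
        rcases (mem_closedNbr G).mp this.1 with rfl | hax
        · rfl
        · exact absurd (hc.valid hax) (by rw [ha, hxi]; simp)
      · rintro rfl; exact hadj
    have hbl : IsLeaf G b := by rw [IsLeaf, hNb, Set.ncard_singleton]
    have hasup : a ∈ supports G := ⟨b, hbl, hadj.symm⟩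
    have hdC : dfun a ∈ C := Or.inr ⟨a, ⟨hasup, ha⟩, rfl⟩
    have hda : G.Adj a (dfun a) := hd1 a hasup
    have : dfun a ∈ closedNbr G b ∩ C := by
      rw [← h]; exact ⟨(mem_closedNbr G).mpr (Or.inr hda), hdC⟩
    rcases (mem_closedNbr G).mp this.1 with heq | hbd
    · exact (hd2 a hasup) (heq ▸ hbl)
    · have : dfun a ∈ G.neighborSet b := hbd
      rw [hNb] at this
      rw [Set.mem_singleton_iff] at this
      exact G.loopless.irrefl a (by rwa [this] at hda)
  refine ⟨C, ⟨?_, ?_⟩, ?_⟩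
  · -- nonempty
    intro v
    by_cases hv : hc v = i
    · exact ⟨v, (mem_closedNbr G).mpr (Or.inl rfl), hAC hv⟩
    · obtain ⟨w, hw⟩ := exists_adj hconn hn v
      have hwi : hc w = i := by
        by_contra hwi
        exact (hc.valid hw) (fin2_eq hv hwi)
      exact ⟨w, (mem_closedNbr G).mpr (Or.inr hw), hAC hwi⟩
  · -- separation
    intro u v h
    by_cases hu : hc u = i <;> by_cases hv : hc v = i
    · have : u ∈ closedNbr G v ∩ C := by
        rw [← h]; exact ⟨(mem_closedNbr G).mpr (Or.inl rfl), hAC hu⟩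
      rcases (mem_closedNbr G).mp this.1 with rfl | hadj
      · rfl
      · exact absurd (hc.valid hadj) (by rw [hu, hv]; simp)
    · exact absurd h fun h => cross hu hv h
    · exact absurd h.symm fun h => cross hv hu h
    · by_contra hne
      have key : ∀ {a b : V}, hc a ≠ i → hc b ≠ i →
          closedNbr G a ∩ C = closedNbr G b ∩ C →
          G.neighborSet a ⊆ G.neighborSet b := by
        intro a b ha hb h x hx
        have hax : G.Adj a x := hx
        have hxi : hc x = i := by
          by_contra hxi
          exact (hc.valid hax) (fin2_eq ha hxi)
        have : x ∈ closedNbr G b ∩ C := by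
          rw [← h]; exact ⟨(mem_closedNbr G).mpr (Or.inr hax), hAC hxi⟩
        rcases (mem_closedNbr G).mp this.1 with rfl | hbx
        · exact absurd hxi hb
        · exact hbx
      exact (htf u v hne).1 (Set.Subset.antisymm (key hu hv h) (key hv hu h.symm))
  · -- cardinality
    refine le_trans (Set.ncard_union_le _ _) ?_
    exact Nat.add_le_add_left (Set.ncard_image_le (Set.toFinite _)) _

end Side

section NonLeaf
variable {V : Type*} [Fintype V] {G : SimpleGraph V}

lemma leaf_trace (hconn : G.Connected) (hn : 3 ≤ Fintype.card V) {v : V} (hv : IsLeaf G v) :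
    closedNbr G v ∩ {w | ¬ IsLeaf G w} = {supOf G v} := by
  ext x
  constructor
  · rintro ⟨hx1, hx2⟩
    rcases (mem_closedNbr G).mp hx1 with rfl | hadj
    · exact absurd hv hx2
    · have : x ∈ G.neighborSet v := hadj
      rwa [supOf_spec hv] at this
  · rintro rfl
    exact ⟨(mem_closedNbr G).mpr (Or.inr (adj_supOf hv)),
      leaf_support_not_leaf hconn hn hv⟩

lemma nonleaf_code (hconn : G.Connected) (htf : TwinFree G) (hn : 3 ≤ Fintype.card V)
    (hc : G.Coloring (Fin 2)) (hP4 : IsEmpty (G ≃g pathGraph 4)) :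
    IsIdCode G {v | ¬ IsLeaf G v} := by
  classical
  set C : Set V := {v | ¬ IsLeaf G v} with hCdef
  constructor
  · intro v
    by_cases hv : IsLeaf G v
    · exact ⟨supOf G v, (mem_closedNbr G).mpr (Or.inr (adj_supOf hv)),
        leaf_support_not_leaf hconn hn hv⟩
    · exact ⟨v, (mem_closedNbr G).mpr (Or.inl rfl), hv⟩
  · intro u v h
    -- mixed case as a claim
    have mixed : ∀ {a b : V}, IsLeaf G a → ¬ IsLeaf G b →
        closedNbr G a ∩ C = closedNbr G b ∩ C → False := by
      intro a b ha hb h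
      have hTb : b ∈ closedNbr G a ∩ C := by
        rw [h]; exact ⟨(mem_closedNbr G).mpr (Or.inl rfl), hb⟩
      rw [leaf_trace hconn hn ha] at h hTb
      rw [Set.mem_singleton_iff] at hTb
      rw [← hTb] at h
      have hNb : ∀ x, G.Adj b x → IsLeaf G x := by
        intro x hbx
        by_contra hxl
        have : x ∈ ({b} : Set V) := by
          rw [h]; exact ⟨(mem_closedNbr G).mpr (Or.inr hbx), hxl⟩
        rw [Set.mem_singleton_iff] at this
        exact G.loopless.irrefl b (this ▸ hbx)
      have hab : G.Adj b a := by
        have := adj_supOf ha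
        rw [← hTb] at this
        exact this.symm
      have : G.neighborSet b = {a} := by
        ext z
        constructor
        · intro hz
          have hbz : G.Adj b z := hz
          exact leaf_eq_of_adj htf (hNb z hbz) ha hbz hab
        · rintro rfl; exact hab
      exact hb (by rw [IsLeaf, this, Set.ncard_singleton])
    by_cases hu : IsLeaf G u <;> by_cases hv : IsLeaf G v
    · -- both leaves
      rw [leaf_trace hconn hn hu, leaf_trace hconn hn hv] at h
      rw [Set.singleton_eq_singleton_iff] at h
      exact leaf_eq_of_adj htf hu hv (h ▸ (adj_supOf hu).symm) (adj_supOf hv).symm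
    · exact absurd h fun h => mixed hu hv h
    · exact absurd h.symm fun h => mixed hv hu h
    · -- both non-leaves
      by_contra hne
      have huv : u ∈ closedNbr G v ∩ C := by
        rw [← h]; exact ⟨(mem_closedNbr G).mpr (Or.inl rfl), hu⟩
      have hadj : G.Adj u v := by
        rcases (mem_closedNbr G).mp huv.1 with rfl | hadj
        · exact absurd rfl hne
        · exact hadj.symm
      have side : ∀ {a b : V}, ¬ IsLeaf G a → ¬ IsLeaf G b → G.Adj a b →
          closedNbr G a ∩ C = closedNbr G b ∩ C →
          ∃ x, IsLeaf G x ∧ G.Adj a x ∧ G.neighborSet a = {b, x} := by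
        intro a b ha hb hab h
        have hex : ∃ x, G.Adj a x ∧ x ≠ b := by
          by_contra hex
          push_neg at hex
          refine ha ?_
          have : G.neighborSet a = {b} := by
            ext z
            exact ⟨fun hz => hex z hz, fun hz => by rw [Set.mem_singleton_iff] at hz; exact hz ▸ hab⟩
          rw [IsLeaf, this, Set.ncard_singleton]
        obtain ⟨x, hax, hxb⟩ := hex
        have hleafnbr : ∀ z, G.Adj a z → z ≠ b → IsLeaf G z := by
          intro z haz hzb
          by_contra hzl
          have : z ∈ closedNbr G b ∩ C := by
            rw [← h]; exact ⟨(mem_closedNbr G).mpr (Or.inr haz), hzl⟩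
          rcases (mem_closedNbr G).mp this.1 with rfl | hbz
          · exact hzb rfl
          · exact no_triangle hc hab haz hbz
        have hxl : IsLeaf G x := hleafnbr x hax hxb
        refine ⟨x, hxl, hax, ?_⟩
        ext z
        constructor
        · intro hz
          have haz : G.Adj a z := hz
          by_cases hzb : z = b
          · exact Or.inl hzb
          · exact Or.inr (leaf_eq_of_adj htf (hleafnbr z haz hzb) hxl haz hax)
        · rintro (rfl | rfl)
          · exact hab
          · exact hax
      obtain ⟨x, hxl, hax, hNu⟩ := side hu hv hadj h
      obtain ⟨y, hyl, hay, hNv⟩ := side hv hu hadj.symm h.symm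
      have hxu : x ≠ u := hax.ne'
      have hxv : x ≠ v := fun hh => hv (hh ▸ hxl)
      have hyv : y ≠ v := hay.ne'
      have hyu : y ≠ u := fun hh => hu (hh ▸ hyl)
      have hxy : x ≠ y := by
        rintro rfl
        exact no_triangle hc hadj hax hay
      have hNx : G.neighborSet x = {u} := leaf_nbhd_eq hxl hax.symm
      have hNy : G.neighborSet y = {v} := leaf_nbhd_eq hyl hay.symm
      -- coverage
      have hall : ∀ w, w ∈ ({x, u, v, y} : Set V) := by
        refine reach_closed hconn _ ?_ (show u ∈ ({x, u, v, y} : Set V) by simp)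
        rintro z (rfl | rfl | rfl | rfl) t ht
        · have : t ∈ G.neighborSet z := ht
          rw [hNx] at this
          rw [Set.mem_singleton_iff] at this
          subst this; simp
        · have : t ∈ G.neighborSet z := ht
          rw [hNu] at this
          rcases this with rfl | rfl <;> simp
        · have : t ∈ G.neighborSet z := ht
          rw [hNv] at this
          rcases this with rfl | rfl <;> simp
        · have : t ∈ G.neighborSet z := ht
          rw [hNy] at this
          rw [Set.mem_singleton_iff] at this
          subst this; simp
      -- non-adjacencies
      have nxv : ¬ G.Adj x v := by
        intro hh
        have : v ∈ G.neighborSet x := hh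
        rw [hNx, Set.mem_singleton_iff] at this
        exact hne this.symm
      have nxy : ¬ G.Adj x y := by
        intro hh
        have : y ∈ G.neighborSet x := hh
        rw [hNx, Set.mem_singleton_iff] at this
        exact hyu this
      have nuy : ¬ G.Adj u y := by
        intro hh
        have : u ∈ G.neighborSet y := hh.symm
        rw [hNy, Set.mem_singleton_iff] at this
        exact hne this
      -- build the isomorphism
      set g : Fin 4 → V := ![x, u, v, y] with hg
      have hginj : Function.Injective g := by
        intro a b hab
        fin_cases a <;> fin_cases b <;>
          first
            | rfl
            | (exfalso; revert hab; simp [hg]; intro hab;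
               first
                 | exact hxu hab | exact hxv hab | exact hxy hab
                 | exact hxu hab.symm | exact hne hab | exact hyu hab.symm
                 | exact hxv hab.symm | exact hne hab.symm | exact hyv hab.symm
                 | exact hxy hab.symm | exact hyu hab | exact hyv hab)
      have hgsurj : Function.Surjective g := by
        intro w
        have := hall w
        simp only [Set.mem_insert_iff, Set.mem_singleton_iff] at this
        rcases this with rfl | rfl | rfl | rfl
        · exact ⟨0, rfl⟩
        · exact ⟨1, rfl⟩
        · exact ⟨2, rfl⟩
        · exact ⟨3, rfl⟩
      have iso : pathGraph 4 ≃g G := by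
        refine ⟨Equiv.ofBijective g ⟨hginj, hgsurj⟩, ?_⟩
        intro a b
        show G.Adj (g a) (g b) ↔ (pathGraph 4).Adj a b
        fin_cases a <;> fin_cases b <;>
          simp only [hg, pathGraph_adj] <;>
          simp [Matrix.cons_val_zero, Matrix.cons_val_one] <;>
          first
            | exact fun hh => G.loopless _ hh
            | exact hax.symm
            | exact hax
            | exact hadj
            | exact hadj.symm
            | exact hay
            | exact hay.symm
            | exact nxv
            | exact fun hh => nxv hh.symm
            | exact nxy
            | exact fun hh => nxy hh.symm
            | exact nuy
            | exact fun hh => nuy hh.symm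
      exact (hP4.false iso.symm).elim

end NonLeaf

section Final
variable {V : Type*} [Fintype V] {G : SimpleGraph V}

lemma leaves_card_eq (hconn : G.Connected) (hn : 3 ≤ Fintype.card V) (htf : TwinFree G) :
    (leaves G).ncard = (supports G).ncard := by
  have himg : supOf G '' (leaves G) = supports G := by
    ext u
    constructor
    · rintro ⟨w, hw, rfl⟩
      exact ⟨w, hw, (adj_supOf hw).symm⟩
    · rintro ⟨w, hwl, hadj⟩
      refine ⟨w, hwl, ?_⟩
      have h1 := supOf_spec hwl
      have h2 := leaf_nbhd_eq hwl hadj.symm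
      rw [h1] at h2
      exact (Set.singleton_eq_singleton_iff.mp h2)
  have hinj : Set.InjOn (supOf G) (leaves G) := by
    intro w hw w' hw' heq
    by_contra hne
    refine (htf w w' hne).1 ?_
    rw [supOf_spec hw, supOf_spec hw', heq]
  rw [← himg, Set.ncard_image_of_injOn hinj]

theorem stmt_6' (hconn : G.Connected) (hbip : G.Colorable 2) (htf : TwinFree G)
    (hn : 3 ≤ Fintype.card V) (hP4 : IsEmpty (G ≃g pathGraph 4)) :
    ∃ C : Set V, IsIdCode G C ∧
      (C.ncard : ℝ) ≤ 2 * (Fintype.card V : ℝ) / 3 := by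
  classical
  obtain ⟨hc⟩ := hbip
  set A0 : Set V := {v | hc v = 0} with hA0
  have hcompl : ({v | hc v = 1} : Set V) = A0ᶜ := by
    ext v
    have : ∀ a : Fin 2, a = 1 ↔ ¬ a = 0 := by decide
    simpa [hA0] using this (hc v)
  have hcard : A0.ncard + A0ᶜ.ncard = Fintype.card V := by
    rw [Set.ncard_add_ncard_compl, Nat.card_eq_fintype_card]
  have hsupp : (supports G ∩ A0).ncard + (supports G ∩ A0ᶜ).ncard = (supports G).ncard := by
    have := Set.ncard_inter_add_ncard_diff_eq_ncard (supports G) A0 (Set.toFinite _)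
    rwa [Set.diff_eq] at this
  have hL : (leaves G).ncard = (supports G).ncard := leaves_card_eq hconn hn htf
  have hLc : (leaves G).ncard + ({v | ¬ IsLeaf G v} : Set V).ncard = Fintype.card V := by
    have : ({v | ¬ IsLeaf G v} : Set V) = (leaves G)ᶜ := rfl
    rw [this, Set.ncard_add_ncard_compl, Nat.card_eq_fintype_card]
  obtain ⟨C1, hC1, hC1card⟩ := side_code hconn htf hn hc 0
  obtain ⟨C2, hC2, hC2card⟩ := side_code hconn htf hn hc 1
  have hC3 : IsIdCode G {v | ¬ IsLeaf G v} := nonleaf_code hconn htf hn hc hP4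
  rw [hcompl] at hC2card
  by_contra hcon
  push_neg at hcon
  have g1 := hcon C1 hC1
  have g2 := hcon C2 hC2
  have g3 := hcon _ hC3
  have r1 : (C1.ncard : ℝ) ≤ (A0.ncard : ℝ) + ((supports G ∩ A0).ncard : ℝ) := by
    exact_mod_cast hC1card
  have r2 : (C2.ncard : ℝ) ≤ (A0ᶜ.ncard : ℝ) + ((supports G ∩ A0ᶜ).ncard : ℝ) := by
    exact_mod_cast hC2card
  have rcard : (A0.ncard : ℝ) + (A0ᶜ.ncard : ℝ) = (Fintype.card V : ℝ) := by
    exact_mod_cast hcard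
  have rsupp : ((supports G ∩ A0).ncard : ℝ) + ((supports G ∩ A0ᶜ).ncard : ℝ)
      = ((supports G).ncard : ℝ) := by exact_mod_cast hsupp
  have rL : ((leaves G).ncard : ℝ) = ((supports G).ncard : ℝ) := by exact_mod_cast hL
  have rLc : ((leaves G).ncard : ℝ) + (({v | ¬ IsLeaf G v} : Set V).ncard : ℝ)
      = (Fintype.card V : ℝ) := by exact_mod_cast hLc
  linarith

end Final


theorem stmt_6 {V : Type*} [Fintype V] (G : SimpleGraph V)
    (hconn : G.Connected) (hbip : G.Colorable 2) (htf : TwinFree G)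
    (hn : 3 ≤ Fintype.card V) (hP4 : IsEmpty (G ≃g pathGraph 4)) :
    ∃ C : Set V, IsIdCode G C ∧
      (C.ncard : ℝ) ≤ 2 * (Fintype.card V : ℝ) / 3 := by
  exact stmt_6' hconn hbip htf hn hP4
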